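/- Let ρ > 0, Ω0 > 0, α > β > 1, and let u0 be a nonconstant 2πρ-periodic C² solution of ü + f(u)u̇ + g(u) = 0, where f(u) = (ρΩ0)⁻¹(1 − β + 3βu²) and g(u) = (ρΩ0)⁻²((α−β)u + βu³), with u̇0(0) = 0 and ü0(0) ≠ 0. Assume f0 := (2πρ)⁻¹ ∫₀^{2πρ} f(u0(s)) ds > 0. Let w11 be the solution of the linearised equation ẅ + f(u0(τ))ẇ + (f′(u0(τ))u̇0(τ) + g′(u0(τ)))w = 0 with w11(0) = 1 and ẇ11(0) = 0. Then there exist a constant γ ∈ ℝ and a continuous 2πρ-periodic function b : ℝ → ℝ such that w11(τ) = γ u̇0(τ) + e^{−f0 τ} b(τ) for all τ ∈ ℝ. -/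

import Mathlib

open Real

/-- Solution predicate for the linear second-order ODE
`w'' + fc w' + cc w = 0`, carrying the first derivative explicitly. -/
def IsLinSol (fc cc w w' : ℝ → ℝ) : Prop :=
  (∀ τ, HasDerivAt w (w' τ) τ) ∧
  (∀ τ, HasDerivAt w' (-fc τ * w' τ - cc τ * w τ) τ)

lemma wronskian_hasDerivAt {fc cc w1 w1' w2 w2' : ℝ → ℝ}
    (h1 : IsLinSol fc cc w1 w1') (h2 : IsLinSol fc cc w2 w2') (τ : ℝ) :
    HasDerivAt (fun t => w1 t * w2' t - w1' t * w2 t)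
      (-fc τ * (w1 τ * w2' τ - w1' τ * w2 τ)) τ := by
  have h := ((h1.1 τ).mul (h2.2 τ)).sub ((h1.2 τ).mul (h2.1 τ))
  refine h.congr_deriv ?_
  ring

lemma wronskian_decay {fc F W : ℝ → ℝ}
    (hF : ∀ τ, HasDerivAt F (fc τ) τ) (hF0 : F 0 = 0)
    (hW : ∀ τ, HasDerivAt W (-fc τ * W τ) τ) (τ : ℝ) :
    W τ = W 0 * Real.exp (-F τ) := by
  have h : ∀ t, HasDerivAt (fun s => W s * Real.exp (F s)) 0 t := by
    intro t
    have h' := (hW t).mul ((hF t).exp)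
    refine h'.congr_deriv ?_
    ring
  have hc : W τ * Real.exp (F τ) = W 0 * Real.exp (F 0) :=
    is_const_of_deriv_eq_zero (fun t => (h t).differentiableAt)
      (fun t => (h t).deriv) τ 0
  rw [hF0, Real.exp_zero, mul_one] at hc
  rw [← hc, Real.exp_neg]
  field_simp

/-- Floquet decomposition (Lemma 6.3): the solution `w11` of the linearised
equation with `w11(0) = 1`, `ẇ11(0) = 0` splits as
`w11(τ) = γ u̇0(τ) + e^{-f0 τ} b(τ)` with `b` continuous `2πρ`-periodic.
Here `f(u) = (ρΩ0)⁻¹(1 - β + 3βu²)`, `g(u) = (ρΩ0)⁻²((α-β)u + βu³)`, so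
`f'(u) = (ρΩ0)⁻¹ 6βu` and `g'(u) = (ρΩ0)⁻²((α-β) + 3βu²)`. -/
theorem floquet_decomposition
    (ρ Ω0 α β : ℝ) (hρ : 0 < ρ) (hΩ0 : 0 < Ω0) (hβ : 1 < β) (hαβ : β < α)
    (u0 : ℝ → ℝ) (hu0C : ContDiff ℝ 2 u0)
    (hnc : ∃ a b : ℝ, u0 a ≠ u0 b)
    (hper : Function.Periodic u0 (2 * π * ρ))
    (hode : ∀ τ : ℝ,
      deriv (deriv u0) τ + (ρ * Ω0)⁻¹ * (1 - β + 3 * β * (u0 τ) ^ 2) * deriv u0 τ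
        + ((ρ * Ω0)⁻¹) ^ 2 * ((α - β) * u0 τ + β * (u0 τ) ^ 3) = 0)
    (h1 : deriv u0 0 = 0) (h2 : deriv (deriv u0) 0 ≠ 0)
    (f0 : ℝ)
    (hf0def : f0 = (2 * π * ρ)⁻¹ *
      ∫ s in (0:ℝ)..(2 * π * ρ), (ρ * Ω0)⁻¹ * (1 - β + 3 * β * (u0 s) ^ 2))
    (hf0pos : 0 < f0)
    (w11 : ℝ → ℝ) (hw11C : ContDiff ℝ 2 w11)
    (hw11ode : ∀ τ : ℝ,
      deriv (deriv w11) τ + (ρ * Ω0)⁻¹ * (1 - β + 3 * β * (u0 τ) ^ 2) * deriv w11 τ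
        + ((ρ * Ω0)⁻¹ * (6 * β * u0 τ) * deriv u0 τ
          + ((ρ * Ω0)⁻¹) ^ 2 * ((α - β) + 3 * β * (u0 τ) ^ 2)) * w11 τ = 0)
    (hw110 : w11 0 = 1) (hw11d0 : deriv w11 0 = 0) :
    ∃ γ : ℝ, ∃ b : ℝ → ℝ, Continuous b ∧ Function.Periodic b (2 * π * ρ) ∧
      ∀ τ : ℝ, w11 τ = γ * deriv u0 τ + Real.exp (-f0 * τ) * b τ := by
  have hT : (0:ℝ) < 2 * π * ρ := by positivity
  set T := 2 * π * ρ with hTdef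
  set fc : ℝ → ℝ := fun τ => (ρ * Ω0)⁻¹ * (1 - β + 3 * β * (u0 τ) ^ 2) with hfcdef
  set cc : ℝ → ℝ := fun τ => (ρ * Ω0)⁻¹ * (6 * β * u0 τ) * deriv u0 τ
      + ((ρ * Ω0)⁻¹) ^ 2 * ((α - β) + 3 * β * (u0 τ) ^ 2) with hccdef
  -- smoothness facts
  have hu2 : ContDiff ℝ (1 + 1) u0 := by rw [one_add_one_eq_two]; exact hu0C
  obtain ⟨hu0d, -, hu0d1⟩ := contDiff_succ_iff_deriv.mp hu2
  have hu1 : ∀ τ, HasDerivAt u0 (deriv u0 τ) τ := fun τ => (hu0d τ).hasDerivAt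
  have hdu_diff : Differentiable ℝ (deriv u0) := hu0d1.differentiable one_ne_zero
  have hv1 : ∀ τ, HasDerivAt (deriv u0) (deriv (deriv u0) τ) τ :=
    fun τ => (hdu_diff τ).hasDerivAt
  have hdu_cont : Continuous (deriv u0) := hu0d1.continuous
  have hw2' : ContDiff ℝ (1 + 1) w11 := by rw [one_add_one_eq_two]; exact hw11C
  obtain ⟨hw11d, -, hw11d1⟩ := contDiff_succ_iff_deriv.mp hw2'
  have hw1 : ∀ τ, HasDerivAt w11 (deriv w11 τ) τ := fun τ => (hw11d τ).hasDerivAt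
  have hw2 : ∀ τ, HasDerivAt (deriv w11) (deriv (deriv w11) τ) τ :=
    fun τ => ((hw11d1.differentiable one_ne_zero) τ).hasDerivAt
  -- periodicity facts
  have hvper : ∀ t, deriv u0 (t + T) = deriv u0 t := by
    intro t
    have h := HasDerivAt.comp_add_const t T (hu1 (t + T))
    have he : (fun x => u0 (x + T)) = u0 := funext fun x => hper x
    rw [he] at h
    exact h.deriv.symm
  have hv'per : ∀ t, deriv (deriv u0) (t + T) = deriv (deriv u0) t := by
    intro t
    have h := HasDerivAt.comp_add_const t T (hv1 (t + T))
    have he : (fun x => deriv u0 (x + T)) = deriv u0 := funext fun x => hvper x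
    rw [he] at h
    exact h.deriv.symm
  have hfcper : ∀ t, fc (t + T) = fc t := by
    intro t; simp only [hfcdef]; rw [hper t]
  have hccper : ∀ t, cc (t + T) = cc t := by
    intro t; simp only [hccdef]; rw [hper t, hvper t]
  -- the three solutions
  have Sw : IsLinSol fc cc w11 (deriv w11) := by
    refine ⟨hw1, fun τ => ?_⟩
    have h := hw2 τ
    have he : deriv (deriv w11) τ = -fc τ * deriv w11 τ - cc τ * w11 τ := by
      have h' := hw11ode τ
      simp only [hfcdef, hccdef]
      linarith
    rwa [he] at h
  have hv'eq : deriv (deriv u0) = fun τ =>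
      -((ρ * Ω0)⁻¹ * (1 - β + 3 * β * (u0 τ) ^ 2) * deriv u0 τ
        + ((ρ * Ω0)⁻¹) ^ 2 * ((α - β) * u0 τ + β * (u0 τ) ^ 3)) :=
    funext fun τ => by have := hode τ; linarith
  have Sv : IsLinSol fc cc (deriv u0) (deriv (deriv u0)) := by
    refine ⟨hv1, fun τ => ?_⟩
    have hsq := (hu1 τ).pow 2
    have hcube := (hu1 τ).pow 3
    have hA := (((hsq.const_mul (3 * β)).const_add (1 - β)).const_mul ((ρ * Ω0)⁻¹)).mul (hv1 τ)
    have hC := (((hu1 τ).const_mul (α - β)).add (hcube.const_mul β)).const_mul (((ρ * Ω0)⁻¹) ^ 2)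
    have hbig := (hA.add hC).neg
    rw [hv'eq]
    refine hbig.congr_deriv ?_
    simp only [hfcdef, hccdef, hv'eq, Pi.pow_apply]
    push_cast
    ring
  have Sshift : IsLinSol fc cc (fun τ => w11 (τ + T)) (fun τ => deriv w11 (τ + T)) := by
    constructor
    · intro τ; exact HasDerivAt.comp_add_const τ T (hw1 (τ + T))
    · intro τ
      have h := HasDerivAt.comp_add_const τ T (Sw.2 (τ + T))
      rw [hfcper, hccper] at h
      exact h
  -- the integral of fc and Wronskian decay
  have hfccont : Continuous fc := by
    rw [hfcdef]; fun_prop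
  set F : ℝ → ℝ := fun τ => ∫ s in (0:ℝ)..τ, fc s with hFdef
  have hFd : ∀ τ, HasDerivAt F (fc τ) τ :=
    fun τ => (hfccont.integral_hasStrictDerivAt 0 τ).hasDerivAt
  have hF0 : F 0 = 0 := intervalIntegral.integral_same
  have hFT : F T = f0 * T := by
    show intervalIntegral fc 0 T MeasureTheory.volume = f0 * T
    rw [hf0def]
    field_simp
  have Wdecay : ∀ {w1 w1' w2 w2' : ℝ → ℝ}, IsLinSol fc cc w1 w1' → IsLinSol fc cc w2 w2' →
      ∀ τ, w1 τ * w2' τ - w1' τ * w2 τ = (w1 0 * w2' 0 - w1' 0 * w2 0) * Real.exp (-F τ) :=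
    fun ha hb τ => wronskian_decay hFd hF0 (wronskian_hasDerivAt ha hb) τ
  -- the Wronskian of (u̇0, w11) never vanishes
  have hW : ∀ τ, deriv u0 τ * deriv w11 τ - deriv (deriv u0) τ * w11 τ
      = -(deriv (deriv u0) 0) * Real.exp (-F τ) := by
    intro τ
    rw [Wdecay Sv Sw τ, h1, hw110, hw11d0]
    ring
  set A := deriv w11 T / deriv (deriv u0) 0 with hAdef
  set B := w11 T with hBdef
  set φ : ℝ → ℝ := fun τ => w11 (τ + T) - A * deriv u0 τ - B * w11 τ with hφdef
  set φ' : ℝ → ℝ := fun τ => deriv w11 (τ + T) - A * deriv (deriv u0) τ - B * deriv w11 τ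
    with hφ'def
  have Sφ : IsLinSol fc cc φ φ' := by
    constructor
    · intro τ
      exact ((Sshift.1 τ).sub ((Sv.1 τ).const_mul A)).sub ((Sw.1 τ).const_mul B)
    · intro τ
      have h := ((Sshift.2 τ).sub ((Sv.2 τ).const_mul A)).sub ((Sw.2 τ).const_mul B)
      refine h.congr_deriv ?_
      simp only [hφdef, hφ'def]
      ring
  have hφ0 : φ 0 = 0 := by
    simp only [hφdef]; rw [zero_add, h1, hw110, hBdef]; ring
  have hφ'0 : φ' 0 = 0 := by
    simp only [hφ'def]
    rw [zero_add, hw11d0, hAdef]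
    field_simp
    ring
  have hW1 : ∀ τ, deriv u0 τ * φ' τ - deriv (deriv u0) τ * φ τ = 0 := by
    intro τ
    have h := Wdecay Sv Sφ τ
    rw [hφ0, hφ'0] at h
    simpa using h
  have hW2 : ∀ τ, w11 τ * φ' τ - deriv w11 τ * φ τ = 0 := by
    intro τ
    have h := Wdecay Sw Sφ τ
    rw [hφ0, hφ'0] at h
    simpa using h
  have hφ : ∀ τ, φ τ = 0 := by
    intro τ
    have hWτ : deriv u0 τ * deriv w11 τ - deriv (deriv u0) τ * w11 τ ≠ 0 := by
      rw [hW τ]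
      exact mul_ne_zero (neg_ne_zero.mpr h2) (Real.exp_ne_zero _)
    have key : (deriv u0 τ * deriv w11 τ - deriv (deriv u0) τ * w11 τ) * φ τ = 0 := by
      linear_combination w11 τ * hW1 τ - deriv u0 τ * hW2 τ
    rcases mul_eq_zero.mp key with h | h
    · exact absurd h hWτ
    · exact h
  have hstar : ∀ τ, w11 (τ + T) = A * deriv u0 τ + B * w11 τ := by
    intro τ
    have h := hφ τ
    simp only [hφdef] at h
    linarith
  -- the Floquet multiplier
  have hBval : B = Real.exp (-(f0 * T)) := by
    have h := hW T
    have e1 : deriv u0 T = 0 := by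
      have := hvper 0; rw [zero_add] at this; rw [this, h1]
    have e2 : deriv (deriv u0) T = deriv (deriv u0) 0 := by
      have := hv'per 0; rw [zero_add] at this; rw [this]
    rw [e1, e2, hFT] at h
    have h' : -deriv (deriv u0) 0 * B = -deriv (deriv u0) 0 * Real.exp (-(f0 * T)) := by
      rw [hBdef]; linarith
    exact mul_left_cancel₀ (neg_ne_zero.mpr h2) h'
  have hBlt : B < 1 := by
    rw [hBval]
    have : Real.exp (-(f0 * T)) < Real.exp 0 :=
      Real.exp_lt_exp.mpr (by nlinarith)
    simpa using this
  have hBne : 1 - B ≠ 0 := sub_ne_zero.mpr hBlt.ne'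
  have hγ : A = A / (1 - B) * (1 - B) := (div_mul_cancel₀ A hBne).symm
  have hE : Real.exp (f0 * T) * B = 1 := by
    rw [hBval, ← Real.exp_add]
    simp
  -- conclusion
  refine ⟨A / (1 - B), fun τ => Real.exp (f0 * τ) * (w11 τ - A / (1 - B) * deriv u0 τ),
    ?_, ?_, ?_⟩
  · exact (Real.continuous_exp.comp (continuous_const.mul continuous_id)).mul
      (hw11C.continuous.sub (continuous_const.mul hdu_cont))
  · intro τ
    show Real.exp (f0 * (τ + T)) * (w11 (τ + T) - A / (1 - B) * deriv u0 (τ + T))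
      = Real.exp (f0 * τ) * (w11 τ - A / (1 - B) * deriv u0 τ)
    rw [hstar τ, hvper τ, mul_add, Real.exp_add]
    linear_combination (Real.exp (f0 * τ) * (w11 τ - A / (1 - B) * deriv u0 τ)) * hE
      + Real.exp (f0 * τ) * Real.exp (f0 * T) * deriv u0 τ * hγ
  · intro τ
    have hE2 : Real.exp (-f0 * τ) * Real.exp (f0 * τ) = 1 := by
      rw [← Real.exp_add]
      ring_nf
      exact Real.exp_zero
    linear_combination (-(w11 τ - A / (1 - B) * deriv u0 τ)) * hE2
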